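/- Fix an integer G ≥ 1 and reals a ≤ b. Over all tuples (r_1, …, r_G) with r_i ∈ [a, b] for every i, the maximum value of the raw reward dispersion Σ_{i=1}^G |r_i − r̄|, where r̄ = (1/G) Σ_{j=1}^G r_j, equals (2/G) · ⌊G/2⌋ · ⌈G/2⌉ · (b − a); moreover this maximum is attained. -/

import Mathlib

lemma aux_pq (G p : ℕ) (hp : p ≤ G) : p * (G - p) ≤ (G/2) * ((G+1)/2) := by
  set k := G/2 with hk
  set m := (G+1)/2 with hm
  have hkm : k + m = G := by omega
  have hcase : p ≤ k ∨ m ≤ p := by omega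
  zify [hp]
  rcases hcase with h | h
  · nlinarith [mul_nonneg (sub_nonneg.2 (by exact_mod_cast h : (p:ℤ) ≤ k))
      (sub_nonneg.2 (by exact_mod_cast (by omega : p ≤ m) : (p:ℤ) ≤ m)),
      (by exact_mod_cast hkm : (k:ℤ) + m = G)]
  · nlinarith [mul_nonneg (sub_nonneg.2 (by exact_mod_cast (by omega : k ≤ p) : (k:ℤ) ≤ p))
      (sub_nonneg.2 (by exact_mod_cast h : (m:ℤ) ≤ p)),
      (by exact_mod_cast hkm : (k:ℤ) + m = G)]

lemma sum_ite_lt (G k : ℕ) (hk : k ≤ G) (x y : ℝ) :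
    ∑ i : Fin G, (if (i:ℕ) < k then x else y) = k * x + (G - k : ℕ) * y := by
  rw [Fin.sum_univ_eq_sum_range (fun i => if i < k then x else y)]
  rw [Finset.range_eq_Ico, ← Finset.sum_Ico_consecutive _ (Nat.zero_le k) hk]
  rw [Finset.sum_congr rfl (fun i hi => if_pos (Finset.mem_Ico.mp hi).2),
      Finset.sum_congr rfl (fun i hi => if_neg (by simpa using (Finset.mem_Ico.mp hi).1))]
  simp [Finset.sum_const, Nat.card_Ico, mul_comm]

theorem reward_dispersion_max
    (G : ℕ) (hG : 1 ≤ G) (a b : ℝ) (hab : a ≤ b) :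
    IsGreatest
      {s : ℝ | ∃ r : Fin G → ℝ, (∀ i, r i ∈ Set.Icc a b) ∧
        s = ∑ i, |r i - (∑ j, r j) / G|}
      ((2 / (G : ℝ)) * (G / 2 : ℕ) * ((G + 1) / 2 : ℕ) * (b - a)) := by
  have hG0 : (0:ℝ) < G := by exact_mod_cast hG
  set k := G / 2 with hkdef
  set m := (G + 1) / 2 with hmdef
  have hkm : k + m = G := by omega
  have hkG : k ≤ G := by omega
  have hkmR : (k:ℝ) + m = G := by exact_mod_cast hkm
  constructor
  · -- membership: witness
    refine ⟨fun i => if (i:ℕ) < k then b else a, fun i => ?_, ?_⟩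
    · by_cases h : (i:ℕ) < k <;> simp [h, hab, le_refl]
    · have hsum : ∑ j : Fin G, (if (j:ℕ) < k then b else a) = k * b + m * a := by
        rw [sum_ite_lt G k hkG b a]
        congr 2
        · exact_mod_cast congrArg Nat.cast (by omega : G - k = m)
      set μ : ℝ := (∑ j : Fin G, (if (j:ℕ) < k then b else a)) / G with hμ
      have hμval : μ = ((k:ℝ) * b + m * a) / G := by rw [hμ, hsum]
      have hμb : μ ≤ b := by
        rw [hμval, div_le_iff₀ hG0]
        have h1 : (m:ℝ) * a ≤ m * b := mul_le_mul_of_nonneg_left hab (Nat.cast_nonneg m)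
        have h2 : (k:ℝ) * b + m * b = b * G := by rw [← hkmR]; ring
        linarith
      have hμa : a ≤ μ := by
        rw [hμval, le_div_iff₀ hG0]
        have h1 : (k:ℝ) * a ≤ k * b := mul_le_mul_of_nonneg_left hab (Nat.cast_nonneg k)
        have h2 : (k:ℝ) * a + m * a = a * G := by rw [← hkmR]; ring
        linarith
      have habs : ∀ i : Fin G, |(if (i:ℕ) < k then b else a) - μ|
          = if (i:ℕ) < k then b - μ else μ - a := by
        intro i
        by_cases h : (i:ℕ) < k
        · simp only [h, if_true]; exact abs_of_nonneg (by linarith)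
        · simp only [h, if_false]; rw [abs_sub_comm]; exact abs_of_nonneg (by linarith)
      calc (2 / (G:ℝ)) * k * m * (b - a)
          = k * (b - μ) + (m:ℝ) * (μ - a) := by
            rw [hμval]; field_simp
            linear_combination ((k:ℝ) * b - (m:ℝ) * a) * hkmR
        _ = k * (b - μ) + ((G - k : ℕ):ℝ) * (μ - a) := by
            congr 2; exact_mod_cast congrArg Nat.cast (by omega : m = G - k)
        _ = ∑ i : Fin G, (if (i:ℕ) < k then b - μ else μ - a) := by
            rw [sum_ite_lt G k hkG]
        _ = ∑ i : Fin G, |(if (i:ℕ) < k then b else a) - μ| := by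
            exact (Finset.sum_congr rfl (fun i _ => (habs i).symm))
  · -- upper bound
    rintro s ⟨r, hr, rfl⟩
    set μ : ℝ := (∑ j, r j) / G with hμ
    have hμa : a ≤ μ := by
      rw [hμ, le_div_iff₀ hG0]
      calc a * G = ∑ _j : Fin G, a := by simp [mul_comm]
        _ ≤ ∑ j, r j := Finset.sum_le_sum (fun i _ => (hr i).1)
    have hμb : μ ≤ b := by
      rw [hμ, div_le_iff₀ hG0]
      calc ∑ j, r j ≤ ∑ _j : Fin G, b := Finset.sum_le_sum (fun i _ => (hr i).2)
        _ = b * G := by simp [mul_comm]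
    set P := Finset.univ.filter (fun i => μ < r i) with hP
    set p := P.card with hp
    have hpG : p ≤ G := by
      calc p ≤ Finset.univ.card := Finset.card_filter_le _ _
        _ = G := by simp
    set q := G - p with hq
    have hPc : Pᶜ.card = q := by
      rw [Finset.card_compl]; simp [hq, hp]
    have hzero : ∑ i, (r i - μ) = 0 := by
      rw [Finset.sum_sub_distrib, Finset.sum_const, Finset.card_univ, Fintype.card_fin]
      rw [hμ, nsmul_eq_mul]; field_simp; ring
    have hsplit : ∑ i, |r i - μ| = ∑ i ∈ P, (r i - μ) + ∑ i ∈ Pᶜ, (μ - r i) := by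
      rw [← Finset.sum_add_sum_compl P (fun i => |r i - μ|)]
      congr 1
      · exact Finset.sum_congr rfl (fun i hi => abs_of_pos
          (by have := (Finset.mem_filter.mp hi).2; linarith))
      · refine Finset.sum_congr rfl (fun i hi => ?_)
        have : ¬ μ < r i := by
          intro h
          exact (Finset.mem_compl.mp hi) (Finset.mem_filter.mpr ⟨Finset.mem_univ i, h⟩)
        rw [abs_sub_comm]; exact abs_of_nonneg (by linarith)
    set T := ∑ i ∈ P, (r i - μ) with hT
    have hTeq : ∑ i ∈ Pᶜ, (μ - r i) = T := by
      have h0 : T + ∑ i ∈ Pᶜ, (r i - μ) = 0 := by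
        rw [hT, Finset.sum_add_sum_compl]; exact hzero
      have h1 : ∑ i ∈ Pᶜ, (μ - r i) + ∑ i ∈ Pᶜ, (r i - μ) = 0 := by
        rw [← Finset.sum_add_distrib]; simp
      linarith
    have hT1 : T ≤ p * (b - μ) := by
      calc T ≤ ∑ _i ∈ P, (b - μ) :=
            Finset.sum_le_sum (fun i _ => by have := (hr i).2; linarith)
        _ = p * (b - μ) := by rw [Finset.sum_const, nsmul_eq_mul]
    have hT2 : T ≤ q * (μ - a) := by
      rw [← hTeq]
      calc ∑ i ∈ Pᶜ, (μ - r i) ≤ ∑ _i ∈ Pᶜ, (μ - a) :=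
            Finset.sum_le_sum (fun i _ => by have := (hr i).1; linarith)
        _ = q * (μ - a) := by rw [Finset.sum_const, nsmul_eq_mul, hPc]
    have hpqR : (p:ℝ) + q = G := by
      have : p + q = G := by omega
      exact_mod_cast this
    have hGT : (G:ℝ) * T ≤ (p * q : ℕ) * (b - a) := by
      have h1 : (q:ℝ) * T ≤ q * (p * (b - μ)) :=
        mul_le_mul_of_nonneg_left hT1 (Nat.cast_nonneg q)
      have h2 : (p:ℝ) * T ≤ p * (q * (μ - a)) :=
        mul_le_mul_of_nonneg_left hT2 (Nat.cast_nonneg p)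
      have h3 : (G:ℝ) * T = p * T + q * T := by rw [← hpqR]; ring
      push_cast
      nlinarith
    have hpqkm : ((p * q : ℕ):ℝ) * (b - a) ≤ ((k * m : ℕ):ℝ) * (b - a) := by
      have := aux_pq G p hpG
      have hle : (p * q : ℕ) ≤ k * m := by rw [hq]; exact this
      exact mul_le_mul_of_nonneg_right (by exact_mod_cast hle) (by linarith)
    have hfin : (G:ℝ) * T ≤ (k:ℝ) * m * (b - a) := by
      calc (G:ℝ) * T ≤ (p * q : ℕ) * (b - a) := hGT
        _ ≤ ((k * m : ℕ):ℝ) * (b - a) := hpqkm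
        _ = (k:ℝ) * m * (b - a) := by push_cast; ring
    calc ∑ i, |r i - μ| = 2 * T := by rw [hsplit, hTeq, hT]; ring
      _ ≤ 2 / G * k * m * (b - a) := by
          rw [div_mul_eq_mul_div, div_mul_eq_mul_div, div_mul_eq_mul_div, le_div_iff₀ hG0]
          nlinarith
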